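/- arXiv:1910.03847 — 8 statements merged into one kernel-verified Lean document; each statement's English description precedes it below -/
import Mathlib

section
/- Let A : X ⇉ X* be a proper monotone operator. Then its Fitzpatrick function H_A(x, x*) = sup{⟨u, x*⟩ + ⟨x, u*⟩ - ⟨u, u*⟩ : (u, u*) ∈ A} is a proper convex lower semicontinuous function on X × X*, and H_A(x, x*) = ⟨x, x*⟩ for all (x, x*) ∈ A. -/
noncomputable section

variable {X : Type*} [NormedAddCommGroup X] [NormedSpace ℝ X] [CompleteSpace X]

/-- The subdifferential of an extended-real-valued function `φ : X → (-∞,+∞]`,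
viewed as a subset of `X × X*`: `(x, x*) ∈ ∂φ` iff `⟨y - x, x*⟩ + φ(x) ≤ φ(y)` for all `y`. -/
def subdiff (φ : X → EReal) : Set (X × (X →L[ℝ] ℝ)) :=
  {p | ∀ y : X, ((p.2 (y - p.1) : ℝ) : EReal) + φ p.1 ≤ φ y}

/-- Convexity for extended-real-valued functions. -/
def ERealConvexOn {E : Type*} [AddCommGroup E] [Module ℝ E] (φ : E → EReal) : Prop :=
  ∀ x y : E, ∀ a b : ℝ, 0 ≤ a → 0 ≤ b → a + b = 1 →
    φ (a • x + b • y) ≤ (a : EReal) * φ x + (b : EReal) * φ y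

/-- A function `X → (-∞,+∞]` is proper: it never takes the value `-∞` and is
finite somewhere. -/
def ProperFn {E : Type*} (φ : E → EReal) : Prop :=
  (∀ x, φ x ≠ ⊥) ∧ (∃ x, φ x ≠ ⊤)

/-- The duality mapping `J_X(x) = {x* : ⟨x, x*⟩ = ‖x‖² = ‖x*‖²}`. -/
def dualityMap (x : X) : Set (X →L[ℝ] ℝ) :=
  {x' | x' x = ‖x‖ ^ 2 ∧ ‖x‖ ^ 2 = ‖x'‖ ^ 2}

/-- A monotone subset of `X × X*`. -/
def MonotoneSet (A : Set (X × (X →L[ℝ] ℝ))) : Prop :=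
  ∀ p ∈ A, ∀ q ∈ A, 0 ≤ (p.2 - q.2) (p.1 - q.1)

/-- A maximal monotone subset of `X × X*`. -/
def MaximalMonotoneSet (A : Set (X × (X →L[ℝ] ℝ))) : Prop :=
  MonotoneSet A ∧
    ∀ p : X × (X →L[ℝ] ℝ), (∀ q ∈ A, 0 ≤ (p.2 - q.2) (p.1 - q.1)) → p ∈ A

/-- The Fitzpatrick function of an operator `A : X ⇉ X*`:
`H_A(x, x*) = sup {⟨u, x*⟩ + ⟨x, u*⟩ - ⟨u, u*⟩ : (u, u*) ∈ A}`. -/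
def fitz (A : Set (X × (X →L[ℝ] ℝ))) (p : X × (X →L[ℝ] ℝ)) : EReal :=
  ⨆ q ∈ A, ((p.2 q.1 + q.2 p.1 - q.2 q.1 : ℝ) : EReal)

/-- `(x*, x) ∈ ∂H_A(u, u*)`, the subdifferential of the Fitzpatrick function at `(u, u*)`
with the pairing `⟨(x*, x), (z, z*)⟩ = ⟨z, x*⟩ + ⟨x, z*⟩`:
`⟨z - u, x*⟩ + ⟨x, z* - u*⟩ + H(u, u*) ≤ H(z, z*)` for all `(z, z*)`. -/
def inSubdiffFitz (A : Set (X × (X →L[ℝ] ℝ))) (u : X) (u' : X →L[ℝ] ℝ)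
    (x' : X →L[ℝ] ℝ) (x : X) : Prop :=
  ∀ z : X, ∀ z' : X →L[ℝ] ℝ,
    ((x' (z - u) + (z' - u') x : ℝ) : EReal) + fitz A (u, u') ≤ fitz A (z, z')

/-- the Fitzpatrick function of a proper monotone operator is proper convex
l.s.c. on `X × X*` and coincides with the duality pairing on the graph of `A`. -/
theorem fitz_basic (A : Set (X × (X →L[ℝ] ℝ))) (hne : A.Nonempty)
    (hmono : MonotoneSet A) :
    ProperFn (fitz A) ∧ ERealConvexOn (fitz A) ∧ LowerSemicontinuous (fitz A) ∧
      ∀ p ∈ A, fitz A p = ((p.2 p.1 : ℝ) : EReal) := by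
  have hle : ∀ (p q : X × (X →L[ℝ] ℝ)), q ∈ A →
      ((p.2 q.1 + q.2 p.1 - q.2 q.1 : ℝ) : EReal) ≤ fitz A p := fun p q hq =>
    le_iSup₂ (f := fun (q : X × (X →L[ℝ] ℝ)) (_ : q ∈ A) =>
      ((p.2 q.1 + q.2 p.1 - q.2 q.1 : ℝ) : EReal)) q hq
  have hgraph : ∀ p ∈ A, fitz A p = ((p.2 p.1 : ℝ) : EReal) := by
    intro p hp
    apply le_antisymm
    · refine iSup₂_le fun q hq => ?_
      have := hmono p hp q hq
      simp only [ContinuousLinearMap.sub_apply, map_sub] at this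
      exact EReal.coe_le_coe_iff.2 (by linarith)
    · simpa using hle p p hp
  have hbot : ∀ p, fitz A p ≠ ⊥ := by
    intro p h
    obtain ⟨q, hq⟩ := hne
    have := hle p q hq
    rw [h, le_bot_iff] at this
    exact EReal.coe_ne_bot _ this
  refine ⟨⟨hbot, ?_⟩, ?_, ?_, hgraph⟩
  · obtain ⟨q, hq⟩ := hne
    exact ⟨q, by rw [hgraph q hq]; exact EReal.coe_ne_top _⟩
  · intro x y a b ha hb hab
    refine iSup₂_le fun q hq => ?_
    have key : ((a • x + b • y).2 q.1 + q.2 (a • x + b • y).1 - q.2 q.1 : ℝ)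
        = a * (x.2 q.1 + q.2 x.1 - q.2 q.1) + b * (y.2 q.1 + q.2 y.1 - q.2 q.1) := by
      simp only [Prod.snd_add, Prod.fst_add, Prod.smul_snd, Prod.smul_fst,
        ContinuousLinearMap.add_apply, ContinuousLinearMap.coe_smul',
        Pi.smul_apply, map_add, map_smul, smul_eq_mul]
      linear_combination (q.2 q.1 : ℝ) * hab
    rw [key, EReal.coe_add, EReal.coe_mul, EReal.coe_mul]
    exact add_le_add
      (mul_le_mul_of_nonneg_left (hle x q hq) (EReal.coe_nonneg.2 ha))
      (mul_le_mul_of_nonneg_left (hle y q hq) (EReal.coe_nonneg.2 hb))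
  · refine lowerSemicontinuous_biSup fun q hq => Continuous.lowerSemicontinuous ?_
    refine continuous_coe_real_ereal.comp ?_
    fun_prop
end
end

section
/- Let A : X ⇉ X* be a maximal monotone operator with Fitzpatrick function H. Then (x, x*) ∈ A if and only if H(x, x*) = ⟨x, x*⟩. -/
noncomputable section

variable {X : Type*} [NormedAddCommGroup X] [NormedSpace ℝ X] [CompleteSpace X]

/-- for a maximal monotone operator, `(x, x*) ∈ A ↔ H(x, x*) = ⟨x, x*⟩`. -/
theorem mem_iff_fitz_eq (A : Set (X × (X →L[ℝ] ℝ))) (hA : MaximalMonotoneSet A) :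
    ∀ p : X × (X →L[ℝ] ℝ), p ∈ A ↔ fitz A p = ((p.2 p.1 : ℝ) : EReal) := by
  intro p
  constructor
  · intro hp
    apply le_antisymm
    · apply iSup₂_le
      intro q hq
      have hm := hA.1 p hp q hq
      simp only [ContinuousLinearMap.sub_apply, map_sub] at hm
      exact EReal.coe_le_coe_iff.mpr (by linarith)
    · have := le_iSup₂ (f := fun q (_ : q ∈ A) =>
        ((p.2 q.1 + q.2 p.1 - q.2 q.1 : ℝ) : EReal)) p hp
      exact le_trans (le_of_eq (by simp)) this
  · intro h
    apply hA.2
    intro q hq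
    have := le_iSup₂ (f := fun q (_ : q ∈ A) =>
      ((p.2 q.1 + q.2 p.1 - q.2 q.1 : ℝ) : EReal)) q hq
    rw [show (⨆ q ∈ A, ((p.2 q.1 + q.2 p.1 - q.2 q.1 : ℝ) : EReal)) = fitz A p from rfl, h] at this
    have h2 := EReal.coe_le_coe_iff.mp this
    simp only [ContinuousLinearMap.sub_apply, map_sub]
    linarith
end
end

section
/- Let A : X ⇉ X* be a monotone operator with Fitzpatrick function H. If (x, x*) ∈ A then (x*, x) ∈ ∂H(x, x*), where the subdifferential of H : X × X* → (-∞, +∞] at (x, x*) is taken in X* × X** (identifying the pairing ⟨(x*, x), (z, z*)⟩ = ⟨z, x*⟩ + ⟨x, z*⟩). -/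
noncomputable section

variable {X : Type*} [NormedAddCommGroup X] [NormedSpace ℝ X] [CompleteSpace X]

/-- for a monotone operator, `(x, x*) ∈ A` implies `(x*, x) ∈ ∂H(x, x*)`. -/
theorem mem_subdiffFitz_of_mem (A : Set (X × (X →L[ℝ] ℝ))) (hne : A.Nonempty)
    (hmono : MonotoneSet A) :
    ∀ p ∈ A, inSubdiffFitz A p.1 p.2 p.2 p.1 := by
  rintro ⟨x, x'⟩ hp z z'
  have hfix : fitz A (x, x') = ((x' x : ℝ) : EReal) := by
    apply le_antisymm
    · refine iSup₂_le fun q hq => ?_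
      have h := hmono q hq (x, x') hp
      simp only [ContinuousLinearMap.sub_apply, map_sub] at h
      exact_mod_cast by linarith
    · exact le_iSup₂_of_le (x, x') hp (by norm_num)
  rw [hfix]
  refine le_trans (le_of_eq ?_) (le_iSup₂_of_le (x, x') hp le_rfl)
  rw [← EReal.coe_add, EReal.coe_eq_coe_iff]
  simp only [map_sub, ContinuousLinearMap.sub_apply]
  ring
end
end

section
/- Let A : X ⇉ X* be a maximal monotone operator with Fitzpatrick function H. If (x*, x) ∈ ∂H(u, u*) for some (u, u*), then ⟨u - x, u* - x*⟩ ≤ inf{⟨z - x, z* - x*⟩ : (z, z*) ∈ A}. -/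
noncomputable section

variable {X : Type*} [NormedAddCommGroup X] [NormedSpace ℝ X] [CompleteSpace X]

/-- if `(x*, x) ∈ ∂H(u, u*)` then
`⟨u - x, u* - x*⟩ ≤ inf {⟨z - x, z* - x*⟩ : (z, z*) ∈ A}`. -/
theorem subdiffFitz_ineq (A : Set (X × (X →L[ℝ] ℝ))) (hA : MaximalMonotoneSet A)
    (u : X) (u' : X →L[ℝ] ℝ) (x : X) (x' : X →L[ℝ] ℝ)
    (h : inSubdiffFitz A u u' x' x) :
    ∀ q ∈ A, (u' - x') (u - x) ≤ (q.2 - x') (q.1 - x) := by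
  intro q hq
  -- H(u,u') ≥ ⟨u,u'⟩ by maximal monotonicity
  have hB : ((u' u : ℝ) : EReal) ≤ fitz A (u, u') := by
    by_cases hmem : ∃ r ∈ A, (u' - r.2) (u - r.1) ≤ 0
    · obtain ⟨r, hr, hr0⟩ := hmem
      refine le_trans ?_ (le_iSup₂_of_le r hr (le_refl _))
      apply EReal.coe_le_coe_iff.mpr
      simp only [ContinuousLinearMap.sub_apply, map_sub] at hr0
      linarith
    · push_neg at hmem
      have hin : (u, u') ∈ A := hA.2 (u, u') (fun r hr => (hmem r hr).le)
      exact absurd (hmem (u, u') hin) (by simp)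
  -- H(q) ≤ ⟨q.1,q.2⟩ by monotonicity
  have hAle : fitz A (q.1, q.2) ≤ ((q.2 q.1 : ℝ) : EReal) := by
    refine iSup₂_le fun r hr => ?_
    apply EReal.coe_le_coe_iff.mpr
    have hm := hA.1 q hq r hr
    simp only [ContinuousLinearMap.sub_apply, map_sub] at hm ⊢
    linarith
  have hsub := h q.1 q.2
  have key : ((x' (q.1 - u) + (q.2 - u') x + u' u : ℝ) : EReal)
      ≤ ((q.2 q.1 : ℝ) : EReal) := by
    calc ((x' (q.1 - u) + (q.2 - u') x + u' u : ℝ) : EReal)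
        = ((x' (q.1 - u) + (q.2 - u') x : ℝ) : EReal) + ((u' u : ℝ) : EReal) :=
          EReal.coe_add _ _
      _ ≤ ((x' (q.1 - u) + (q.2 - u') x : ℝ) : EReal) + fitz A (u, u') :=
          add_le_add (le_refl _) hB
      _ ≤ fitz A (q.1, q.2) := hsub
      _ ≤ _ := hAle
  have keyR : x' (q.1 - u) + (q.2 - u') x + u' u ≤ q.2 q.1 :=
    EReal.coe_le_coe_iff.mp key
  simp only [ContinuousLinearMap.sub_apply, map_sub] at keyR ⊢
  linarith
end
end

section
/- Let A : X ⇉ X* be a maximal monotone operator with Fitzpatrick function H. If there exists (u, u*) such that (x*, x) ∈ ∂H(u, u*) and ⟨u - x, u* - x*⟩ ≥ 0, then (x, x*) ∈ A. -/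
noncomputable section

variable {X : Type*} [NormedAddCommGroup X] [NormedSpace ℝ X] [CompleteSpace X]

lemma le_fitz_aux (A : Set (X × (X →L[ℝ] ℝ))) {q : X × (X →L[ℝ] ℝ)} (hq : q ∈ A)
    (p : X × (X →L[ℝ] ℝ)) :
    ((p.2 q.1 + q.2 p.1 - q.2 q.1 : ℝ) : EReal) ≤ fitz A p :=
  le_iSup₂ (f := fun q (_ : q ∈ A) => ((p.2 q.1 + q.2 p.1 - q.2 q.1 : ℝ) : EReal)) q hq

lemma fitz_le_aux (A : Set (X × (X →L[ℝ] ℝ))) (p : X × (X →L[ℝ] ℝ)) (c : EReal)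
    (h : ∀ q ∈ A, ((p.2 q.1 + q.2 p.1 - q.2 q.1 : ℝ) : EReal) ≤ c) : fitz A p ≤ c :=
  iSup₂_le h

/-- if `(x*, x) ∈ ∂H(u, u*)` for some `(u, u*)` with `⟨u - x, u* - x*⟩ ≥ 0`,
then `(x, x*) ∈ A`. -/
theorem mem_of_subdiffFitz (A : Set (X × (X →L[ℝ] ℝ))) (hA : MaximalMonotoneSet A)
    (x : X) (x' : X →L[ℝ] ℝ)
    (h : ∃ (u : X) (u' : X →L[ℝ] ℝ),
      inSubdiffFitz A u u' x' x ∧ 0 ≤ (u' - x') (u - x)) :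
    (x, x') ∈ A := by
  obtain ⟨u, u', hsub, hmono⟩ := h
  apply hA.2
  rintro ⟨y, y'⟩ hq
  -- fitz A (y, y') = ⟨y, y'⟩
  have hfyy : fitz A (y, y') = ((y' y : ℝ) : EReal) := by
    apply le_antisymm
    · apply fitz_le_aux
      rintro ⟨w, w'⟩ hw
      have := hA.1 _ hq _ hw
      simp only [ContinuousLinearMap.sub_apply, map_sub] at this ⊢
      exact_mod_cast by linarith
    · have := le_fitz_aux A hq (y, y')
      simpa using this
  -- fitz A (u, u') is finite
  have hlow := le_fitz_aux A hq (u, u')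
  have hne_bot : fitz A (u, u') ≠ ⊥ := fun hb => by
    rw [hb] at hlow; exact (EReal.coe_ne_bot _) (le_bot_iff.mp hlow)
  have hkey := hsub y y'
  rw [hfyy] at hkey
  have hne_top : fitz A (u, u') ≠ ⊤ := fun ht => by
    rw [ht, EReal.add_top_of_ne_bot (EReal.coe_ne_bot _)] at hkey
    exact (EReal.coe_ne_top _) (top_le_iff.mp hkey)
  set c := (fitz A (u, u')).toReal with hc
  have hceq : fitz A (u, u') = ((c : ℝ) : EReal) := (EReal.coe_toReal hne_top hne_bot).symm
  -- fitz A (u, u') ≥ ⟨u, u'⟩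
  have huu : u' u ≤ c := by
    by_contra hcon
    push_neg at hcon
    have hmemA : (u, u') ∈ A := by
      apply hA.2
      rintro ⟨w, w'⟩ hw
      have h1 := le_fitz_aux A hw (u, u')
      rw [hceq] at h1
      have h2 : u' w + w' u - w' w ≤ c := by exact_mod_cast h1
      simp only [ContinuousLinearMap.sub_apply, map_sub]
      linarith
    have h3 := le_fitz_aux A hmemA (u, u')
    rw [hceq] at h3
    have h4 : u' u + u' u - u' u ≤ c := by exact_mod_cast h3
    linarith
  -- main inequality
  rw [hceq, ← EReal.coe_add] at hkey
  have hk : x' (y - u) + (y' - u') x + c ≤ y' y := by exact_mod_cast hkey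
  have hm : 0 ≤ (u' - x') (u - x) := hmono
  simp only [ContinuousLinearMap.sub_apply, map_sub] at hk hm ⊢
  linarith
end
end

section
/- Let A : X ⇉ X* be a maximal monotone operator with Fitzpatrick function H. Then the following are equivalent: (a) (x, x*) ∈ A; (b) H(x, x*) = ⟨x, x*⟩; (c) there exists (u, u*) with (x*, x) ∈ ∂H(u, u*) and ⟨u - x, u* - x*⟩ ≥ 0; (d) (x*, x) ∈ ∂H(x, x*). -/
noncomputable section

variable {X : Type*} [NormedAddCommGroup X] [NormedSpace ℝ X] [CompleteSpace X]

lemma aux_nonempty (A : Set (X × (X →L[ℝ] ℝ))) (hA : MaximalMonotoneSet A) :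
    A.Nonempty := by
  by_contra h
  rw [Set.not_nonempty_iff_eq_empty] at h
  subst h
  exact (hA.2 (0, 0) (fun q hq => absurd hq (Set.notMem_empty q))).elim

lemma aux_term_le_fitz (A : Set (X × (X →L[ℝ] ℝ))) (p : X × (X →L[ℝ] ℝ))
    {q : X × (X →L[ℝ] ℝ)} (hq : q ∈ A) :
    ((p.2 q.1 + q.2 p.1 - q.2 q.1 : ℝ) : EReal) ≤ fitz A p :=
  le_iSup₂ (f := fun q (_ : q ∈ A) => ((p.2 q.1 + q.2 p.1 - q.2 q.1 : ℝ) : EReal)) q hq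

lemma aux_fitz_eq_of_mem (A : Set (X × (X →L[ℝ] ℝ))) (hA : MonotoneSet A)
    {x : X} {x' : X →L[ℝ] ℝ} (hx : (x, x') ∈ A) :
    fitz A (x, x') = ((x' x : ℝ) : EReal) := by
  apply le_antisymm
  · refine iSup₂_le fun q hq => ?_
    have h0 := hA (x, x') hx q hq
    simp only [ContinuousLinearMap.sub_apply, map_sub] at h0
    exact EReal.coe_le_coe_iff.mpr (by linarith)
  · have := aux_term_le_fitz A (x, x') hx
    simpa using this

lemma aux_fitz_ge (A : Set (X × (X →L[ℝ] ℝ))) (hA : MaximalMonotoneSet A)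
    (x : X) (x' : X →L[ℝ] ℝ) : ((x' x : ℝ) : EReal) ≤ fitz A (x, x') := by
  by_contra h
  push_neg at h
  have hm : (x, x') ∈ A := by
    refine hA.2 (x, x') fun q hq => ?_
    have h1 : ((x' q.1 + q.2 x - q.2 q.1 : ℝ) : EReal) < ((x' x : ℝ) : EReal) :=
      lt_of_le_of_lt (aux_term_le_fitz A (x, x') hq) h
    rw [EReal.coe_lt_coe_iff] at h1
    simp only [ContinuousLinearMap.sub_apply, map_sub]
    linarith
  exact absurd (aux_fitz_eq_of_mem A hA.1 hm ▸ h) (lt_irrefl _)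

/-- Fitzpatrick's theorem: the four characterizations are equivalent. -/
theorem fitz_tfae (A : Set (X × (X →L[ℝ] ℝ))) (hA : MaximalMonotoneSet A)
    (x : X) (x' : X →L[ℝ] ℝ) :
    List.TFAE [
      (x, x') ∈ A,
      fitz A (x, x') = ((x' x : ℝ) : EReal),
      ∃ (u : X) (u' : X →L[ℝ] ℝ),
        inSubdiffFitz A u u' x' x ∧ 0 ≤ (u' - x') (u - x),
      inSubdiffFitz A x x' x' x ] := by
  tfae_have 1 → 2 := fun h => aux_fitz_eq_of_mem A hA.1 h
  tfae_have 2 → 1 := by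
    intro h
    refine hA.2 (x, x') fun q hq => ?_
    have h1 : ((x' q.1 + q.2 x - q.2 q.1 : ℝ) : EReal) ≤ ((x' x : ℝ) : EReal) :=
      h ▸ aux_term_le_fitz A (x, x') hq
    rw [EReal.coe_le_coe_iff] at h1
    simp only [ContinuousLinearMap.sub_apply, map_sub]
    linarith
  tfae_have 1 → 4 := by
    intro h z z'
    rw [aux_fitz_eq_of_mem A hA.1 h, ← EReal.coe_add]
    have heq : x' (z - x) + (z' - x') x + x' x = z' x + x' z - x' x := by
      simp only [map_sub, ContinuousLinearMap.sub_apply]; ring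
    rw [heq]
    exact aux_term_le_fitz A (z, z') h
  tfae_have 4 → 3 := fun h => ⟨x, x', h, by simp⟩
  tfae_have 3 → 1 := by
    rintro ⟨u, u', hsub, hmon⟩
    obtain ⟨y0, hy0⟩ := aux_nonempty A hA
    have hbot : ((u' u : ℝ) : EReal) ≤ fitz A (u, u') := aux_fitz_ge A hA u u'
    have htop : fitz A (u, u') ≠ ⊤ := by
      intro ht
      have hk := hsub y0.1 y0.2
      rw [ht, aux_fitz_eq_of_mem A hA.1 hy0] at hk
      rw [EReal.coe_add_top] at hk
      exact absurd hk (EReal.coe_lt_top _).not_ge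
    have hbot' : fitz A (u, u') ≠ ⊥ := fun hb => by
      rw [hb] at hbot; exact absurd hbot (by simp)
    set r : ℝ := (fitz A (u, u')).toReal with hrdef
    have hr : fitz A (u, u') = (r : EReal) := (EReal.coe_toReal htop hbot').symm
    have hr_ge : u' u ≤ r := by
      rw [hr] at hbot; exact EReal.coe_le_coe_iff.mp hbot
    refine hA.2 (x, x') fun q hq => ?_
    have key := hsub q.1 q.2
    rw [hr, aux_fitz_eq_of_mem A hA.1 hq, ← EReal.coe_add] at key
    have key' := EReal.coe_le_coe_iff.mp key
    simp only [map_sub, ContinuousLinearMap.sub_apply] at key' hmon ⊢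
    linarith
  tfae_finish
end
end

section
/- Rockafellar's surjectivity theorem: Let X be a reflexive real Banach space and A : X ⇉ X* a maximal monotone operator. Then for all λ > 0, R(J_X + λA) = X*: for every z* ∈ X* there exist x ∈ X, y* ∈ J_X(x), x* ∈ A(x) with z* = y* + λx*. -/
noncomputable section

variable {X : Type*} [NormedAddCommGroup X] [NormedSpace ℝ X] [CompleteSpace X]

section AuxiliaryLemmas

theorem my_half_sq_opNorm_le {E : Type*} [NormedAddCommGroup E] [NormedSpace ℝ E]
    (h : E →L[ℝ] ℝ) (r : ℝ) (H : ∀ q : E, -h q - ‖q‖ ^ 2 / 2 ≤ r) : ‖h‖ ^ 2 / 2 ≤ r := by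
  have hr0 : 0 ≤ r := by simpa using H 0
  have key : ∀ s : ℝ, 0 < s → ‖h‖ ≤ (r + s ^ 2 / 2) / s := by
    intro s hs
    refine ContinuousLinearMap.opNorm_le_bound h (by positivity) ?_
    intro q
    rcases eq_or_ne q 0 with rfl | hq
    · simp
    have hq0 : 0 < ‖q‖ := norm_pos_iff.mpr hq
    have h1 := H ((s / ‖q‖) • q)
    have h2 := H (-((s / ‖q‖) • q))
    have hnq : ‖(s / ‖q‖) • q‖ = s := by
      rw [norm_smul, Real.norm_eq_abs, abs_of_pos (by positivity)]
      field_simp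
    rw [norm_neg, map_neg, neg_neg] at h2
    have hap : h ((s / ‖q‖) • q) = s / ‖q‖ * h q := by rw [map_smul]; simp
    rw [hnq, hap] at h1 h2
    have habs : |h q| * (s / ‖q‖) ≤ r + s ^ 2 / 2 := by
      rcases abs_cases (h q) with ⟨he, _⟩ | ⟨he, _⟩ <;> rw [he] <;> nlinarith
    rw [Real.norm_eq_abs]
    rw [div_mul_eq_mul_div, le_div_iff₀ hs]
    calc |h q| * s = |h q| * (s / ‖q‖) * ‖q‖ := by field_simp
    _ ≤ (r + s ^ 2 / 2) * ‖q‖ := mul_le_mul_of_nonneg_right habs (norm_nonneg q)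
  rcases eq_or_lt_of_le (norm_nonneg h) with h0 | h0
  · rw [← h0]; nlinarith
  · have := key ‖h‖ h0
    rw [le_div_iff₀ h0] at this
    nlinarith

theorem my_normsq_convex {E : Type*} [NormedAddCommGroup E] [NormedSpace ℝ E]
    (x y : E) (a b : ℝ) (ha : 0 ≤ a) (hb : 0 ≤ b) (hab : a + b = 1) :
    ‖a • x + b • y‖ ^ 2 / 2 ≤ a * (‖x‖ ^ 2 / 2) + b * (‖y‖ ^ 2 / 2) := by
  have h1 : ‖a • x + b • y‖ ≤ a * ‖x‖ + b * ‖y‖ := by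
    calc ‖a • x + b • y‖ ≤ ‖a • x‖ + ‖b • y‖ := norm_add_le _ _
    _ = a * ‖x‖ + b * ‖y‖ := by rw [norm_smul, norm_smul, Real.norm_eq_abs,
        Real.norm_eq_abs, abs_of_nonneg ha, abs_of_nonneg hb]
  nlinarith [norm_nonneg (a • x + b • y), norm_nonneg x, norm_nonneg y,
    mul_nonneg ha hb, sq_nonneg (‖x‖ - ‖y‖)]

set_option maxHeartbeats 2000000 in
/-- Fenchel-duality type separation lemma for a maximal monotone set `B ⊆ X × X*`,
obtained by applying Hahn-Banach separation to the (real-valued) epigraph of the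
Fitzpatrick function of `B` and the strict hypograph of `-(‖x‖² + ‖x*‖²)/2`. -/
theorem my_separation (B : Set (X × (X →L[ℝ] ℝ)))
    (hBmono : ∀ p ∈ B, ∀ q ∈ B, 0 ≤ (p.2 - q.2) (p.1 - q.1))
    (hBmax : ∀ p : X × (X →L[ℝ] ℝ),
      (∀ q ∈ B, 0 ≤ (p.2 - q.2) (p.1 - q.1)) → p ∈ B)
    (hBne : B.Nonempty) :
    ∃ (φ : X →L[ℝ] ℝ) (ξ : (X →L[ℝ] ℝ) →L[ℝ] ℝ) (v : ℝ),
      (∀ q ∈ B, φ q.1 + ξ q.2 + v ≤ q.2 q.1) ∧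
      (∀ (q₁ : X) (q₂ : X →L[ℝ] ℝ),
        -φ q₁ - ξ q₂ - ‖q₁‖ ^ 2 / 2 - ‖q₂‖ ^ 2 / 2 ≤ v) := by
  classical
  obtain ⟨q₀, hq₀⟩ := hBne
  have hpair : ∀ p : X × (X →L[ℝ] ℝ), -(‖p.1‖ ^ 2 / 2 + ‖p.2‖ ^ 2 / 2) ≤ p.2 p.1 := by
    intro p
    have h1 : ‖p.2 p.1‖ ≤ ‖p.2‖ * ‖p.1‖ := p.2.le_opNorm p.1
    rw [Real.norm_eq_abs] at h1
    have h2 : -(‖p.2‖ * ‖p.1‖) ≤ p.2 p.1 := neg_le_of_abs_le h1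
    nlinarith [sq_nonneg (‖p.1‖ - ‖p.2‖)]
  set O : Set ((X × (X →L[ℝ] ℝ)) × ℝ) :=
    {pt | pt.2 < -(‖pt.1.1‖ ^ 2 / 2 + ‖pt.1.2‖ ^ 2 / 2)} with hOdef
  set C : Set ((X × (X →L[ℝ] ℝ)) × ℝ) :=
    {pt | ∀ q ∈ B, pt.1.2 q.1 + q.2 pt.1.1 - q.2 q.1 ≤ pt.2} with hCdef
  have hOopen : IsOpen O := by
    apply isOpen_lt
    · exact continuous_snd
    · fun_prop
  have hOconv : Convex ℝ O := by
    intro pt hpt pt' hpt' a b ha hb hab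
    rcases eq_or_lt_of_le ha with rfl | ha'
    · have hb1 : b = 1 := by linarith
      subst hb1
      simpa using hpt'
    · have h1 := my_normsq_convex pt.1.1 pt'.1.1 a b ha hb hab
      have h2 := my_normsq_convex pt.1.2 pt'.1.2 a b ha hb hab
      have h3 : a * pt.2 < a * (-(‖pt.1.1‖ ^ 2 / 2 + ‖pt.1.2‖ ^ 2 / 2)) :=
        mul_lt_mul_of_pos_left hpt ha'
      have h4 : b * pt'.2 ≤ b * (-(‖pt'.1.1‖ ^ 2 / 2 + ‖pt'.1.2‖ ^ 2 / 2)) :=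
        mul_le_mul_of_nonneg_left hpt'.le hb
      show (a • pt + b • pt').2 < -(‖(a • pt + b • pt').1.1‖ ^ 2 / 2
        + ‖(a • pt + b • pt').1.2‖ ^ 2 / 2)
      simp only [Prod.snd_add, Prod.fst_add, Prod.smul_snd, Prod.smul_fst, smul_eq_mul]
      linarith
  have hCconv : Convex ℝ C := by
    intro pt hpt pt' hpt' a b ha hb hab
    intro q hq
    have h1 := mul_le_mul_of_nonneg_left (hpt q hq) ha
    have h2 := mul_le_mul_of_nonneg_left (hpt' q hq) hb
    have hsplit : q.2 q.1 = a * q.2 q.1 + b * q.2 q.1 := by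
      rw [← add_mul, hab, one_mul]
    show (a • pt + b • pt').1.2 q.1 + q.2 (a • pt + b • pt').1.1 - q.2 q.1
      ≤ (a • pt + b • pt').2
    simp only [Prod.fst_add, Prod.snd_add, Prod.smul_fst, Prod.smul_snd,
      ContinuousLinearMap.add_apply, ContinuousLinearMap.smul_apply, map_add, map_smul,
      smul_eq_mul]
    linarith
  have hdisj : Disjoint O C := by
    rw [Set.disjoint_left]
    rintro pt hO hC
    have hO' : pt.2 < -(‖pt.1.1‖ ^ 2 / 2 + ‖pt.1.2‖ ^ 2 / 2) := hO
    have hpB : pt.1 ∈ B := by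
      refine hBmax pt.1 (fun q hq => ?_)
      have h1 := hC q hq
      have h2 := hpair pt.1
      have key : (pt.1.2 - q.2) (pt.1.1 - q.1)
          = pt.1.2 pt.1.1 - (pt.1.2 q.1 + q.2 pt.1.1 - q.2 q.1) := by
        simp only [ContinuousLinearMap.sub_apply, map_sub]
        ring
      rw [key]
      linarith
    have h1 := hC pt.1 hpB
    have h2 := hpair pt.1
    linarith
  obtain ⟨f, u, hfO, hfC⟩ := geometric_hahn_banach_open hOconv hOopen hCconv hdisj
  set g : (X × (X →L[ℝ] ℝ)) →L[ℝ] ℝ :=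
    f.comp (ContinuousLinearMap.inl ℝ (X × (X →L[ℝ] ℝ)) ℝ) with hgdef
  set c : ℝ := f (0, 1) with hcdef
  have hf_eq : ∀ pt : (X × (X →L[ℝ] ℝ)) × ℝ, f pt = g pt.1 + pt.2 * c := by
    intro pt
    have hsplit : pt = (pt.1, 0) + pt.2 • ((0 : X × (X →L[ℝ] ℝ)), (1 : ℝ)) := by
      simp [Prod.ext_iff]
    rw [hsplit, map_add, map_smul]
    simp [hgdef, smul_eq_mul]
    exact Or.inl hcdef.symm
  have hCu : ∀ (p : X × (X →L[ℝ] ℝ)) (t : ℝ),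
      (∀ q ∈ B, p.2 q.1 + q.2 p.1 - q.2 q.1 ≤ t) → u ≤ g p + t * c := by
    intro p t hpt
    have h := hfC (p, t) hpt
    rwa [hf_eq] at h
  have hOu : ∀ (p : X × (X →L[ℝ] ℝ)) (t : ℝ),
      t < -(‖p.1‖ ^ 2 / 2 + ‖p.2‖ ^ 2 / 2) → g p + t * c < u := by
    intro p t ht
    have h := hfO (p, t) ht
    rwa [hf_eq] at h
  clear_value c
  clear hf_eq hfO hfC hcdef
  have hq₀C : ∀ q ∈ B, q₀.2 q.1 + q.2 q₀.1 - q.2 q.1 ≤ q₀.2 q₀.1 := by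
    intro q hq
    have h0 := hBmono q₀ hq₀ q hq
    have key : (q₀.2 - q.2) (q₀.1 - q.1)
        = q₀.2 q₀.1 - (q₀.2 q.1 + q.2 q₀.1 - q.2 q.1) := by
      simp only [ContinuousLinearMap.sub_apply, map_sub]
      ring
    rw [key] at h0
    linarith
  clear hOopen hOconv hCconv hdisj hOdef hCdef
  clear O C
  have hcpos : 0 < c := by
    rcases lt_trichotomy c 0 with hc | hc | hc
    · exfalso
      have h1 := hCu q₀ (max (q₀.2 q₀.1) ((u - g q₀ - 1) / c)) (fun q hq =>
        le_trans (hq₀C q hq) (le_max_left _ _))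
      have hT2 : (u - g q₀ - 1) / c ≤ max (q₀.2 q₀.1) ((u - g q₀ - 1) / c) :=
        le_max_right _ _
      have h2 : max (q₀.2 q₀.1) ((u - g q₀ - 1) / c) * c ≤ u - g q₀ - 1 := by
        have h3 := mul_le_mul_of_nonpos_right hT2 hc.le
        rwa [div_mul_cancel₀ _ (ne_of_lt hc)] at h3
      linarith
    · exfalso
      have hgu : ∀ p : X × (X →L[ℝ] ℝ), g p < u := by
        intro p
        have h := hOu p (-(‖p.1‖ ^ 2 / 2 + ‖p.2‖ ^ 2 / 2) - 1) (by linarith)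
        rw [hc] at h
        linarith
      have hg0 : ∀ p : X × (X →L[ℝ] ℝ), g p = 0 := by
        intro p
        by_contra hne
        have h1 := hgu (((u + 1) / g p) • p)
        rw [map_smul, smul_eq_mul, div_mul_cancel₀ _ hne] at h1
        linarith
      have h1 := hCu q₀ (q₀.2 q₀.1) hq₀C
      rw [hg0, hc] at h1
      have h2 := hOu 0 (-1) (by norm_num)
      rw [hg0, hc] at h2
      linarith
    · exact hc
  have hc' : c ≠ 0 := ne_of_gt hcpos
  set g₁ : X →L[ℝ] ℝ := g.comp (ContinuousLinearMap.inl ℝ X (X →L[ℝ] ℝ)) with hg₁def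
  set g₂ : (X →L[ℝ] ℝ) →L[ℝ] ℝ := g.comp (ContinuousLinearMap.inr ℝ X (X →L[ℝ] ℝ)) with hg₂def
  have hgsplit : ∀ p : X × (X →L[ℝ] ℝ), g p = g₁ p.1 + g₂ p.2 := by
    intro p
    have hsplit : p = (p.1, (0 : X →L[ℝ] ℝ)) + ((0 : X), p.2) := by simp [Prod.ext_iff]
    rw [hsplit, map_add]
    simp [hg₁def, hg₂def]
  clear_value g₁ g₂
  clear hg₁def hg₂def hgdef
  refine ⟨-(c⁻¹ • g₁), -(c⁻¹ • g₂), u / c, ?_, ?_⟩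
  · intro q hq
    have h1 : u ≤ g q + q.2 q.1 * c := by
      refine hCu q (q.2 q.1) (fun q' hq' => ?_)
      have h0 := hBmono q hq q' hq'
      have key : (q.2 - q'.2) (q.1 - q'.1)
          = q.2 q.1 - (q.2 q'.1 + q'.2 q.1 - q'.2 q'.1) := by
        simp only [ContinuousLinearMap.sub_apply, map_sub]
        ring
      rw [key] at h0
      linarith
    rw [hgsplit] at h1
    show -(c⁻¹ • g₁) q.1 + -(c⁻¹ • g₂) q.2 + u / c ≤ q.2 q.1
    simp only [ContinuousLinearMap.neg_apply, ContinuousLinearMap.smul_apply, smul_eq_mul]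
    rw [← sub_nonneg]
    have key : q.2 q.1 - (-(c⁻¹ * g₁ q.1) + -(c⁻¹ * g₂ q.2) + u / c)
        = (g₁ q.1 + g₂ q.2 + q.2 q.1 * c - u) / c := by
      rw [eq_div_iff hc']
      field_simp
      ring
    rw [key]
    exact div_nonneg (by linarith) hcpos.le
  · intro q₁ q₂
    have hOlim : g₁ q₁ + g₂ q₂ - (‖q₁‖ ^ 2 / 2 + ‖q₂‖ ^ 2 / 2) * c ≤ u := by
      by_contra hlt
      push_neg at hlt
      obtain ⟨F, hFdef⟩ : ∃ F : ℝ, F = ‖q₁‖ ^ 2 / 2 + ‖q₂‖ ^ 2 / 2 := ⟨_, rfl⟩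
      rw [← hFdef] at hlt
      obtain ⟨ε, hεdef⟩ : ∃ ε : ℝ, ε = (g₁ q₁ + g₂ q₂ - F * c - u) / (2 * c) := ⟨_, rfl⟩
      have hεpos : 0 < ε := by
        rw [hεdef]
        apply div_pos (by linarith) (by linarith)
      have h := hOu (q₁, q₂) (-F - ε) (by simp only; rw [hFdef] at hlt ⊢; linarith)
      rw [hgsplit] at h
      simp only at h
      have hεc : ε * c = (g₁ q₁ + g₂ q₂ - F * c - u) / 2 := by
        rw [hεdef, div_mul_eq_mul_div, mul_comm 2 c, ← div_div,
          mul_div_assoc, div_self hc', mul_one]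
      have hexp : (-F - ε) * c = -(F * c) - ε * c := by ring
      rw [hexp, hεc] at h
      linarith
    show -(-(c⁻¹ • g₁) q₁) - (-(c⁻¹ • g₂)) q₂ - ‖q₁‖ ^ 2 / 2 - ‖q₂‖ ^ 2 / 2 ≤ u / c
    simp only [ContinuousLinearMap.neg_apply, ContinuousLinearMap.smul_apply, smul_eq_mul]
    rw [← sub_nonneg]
    have key : u / c - (-(-(c⁻¹ * g₁ q₁)) - -(c⁻¹ * g₂ q₂) - ‖q₁‖ ^ 2 / 2 - ‖q₂‖ ^ 2 / 2)
        = (u - (g₁ q₁ + g₂ q₂ - (‖q₁‖ ^ 2 / 2 + ‖q₂‖ ^ 2 / 2) * c)) / c := by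
      rw [eq_div_iff hc']
      field_simp
      ring
    rw [key]
    exact div_nonneg (by linarith) hcpos.le

set_option maxHeartbeats 1000000 in
/-- Core of Rockafellar's surjectivity theorem: a maximal monotone `B` on a reflexive
space contains a point `(w, φ)` with `-φ ∈ J_X(w)`. -/
theorem my_core
    (hrefl : Function.Surjective (NormedSpace.inclusionInDoubleDual ℝ X))
    (B : Set (X × (X →L[ℝ] ℝ)))
    (hBmono : ∀ p ∈ B, ∀ q ∈ B, 0 ≤ (p.2 - q.2) (p.1 - q.1))
    (hBmax : ∀ p : X × (X →L[ℝ] ℝ),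
      (∀ q ∈ B, 0 ≤ (p.2 - q.2) (p.1 - q.1)) → p ∈ B)
    (hBne : B.Nonempty) :
    ∃ (w : X) (φ : X →L[ℝ] ℝ), (w, φ) ∈ B ∧ φ w = -‖w‖ ^ 2 ∧ ‖φ‖ = ‖w‖ := by
  obtain ⟨φ, ξ, v, hK1, hstar⟩ := my_separation B hBmono hBmax hBne
  have hv1 : ∀ q₂ : X →L[ℝ] ℝ, ‖φ‖ ^ 2 / 2 ≤ v + ξ q₂ + ‖q₂‖ ^ 2 / 2 := by
    intro q₂
    exact my_half_sq_opNorm_le φ _ (fun q₁ => by linarith [hstar q₁ q₂])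
  have hv2 : ‖ξ‖ ^ 2 / 2 ≤ v - ‖φ‖ ^ 2 / 2 :=
    my_half_sq_opNorm_le ξ _ (fun q₂ => by linarith [hv1 q₂])
  obtain ⟨w, hw⟩ := hrefl ξ
  have hξw : ∀ ψ : X →L[ℝ] ℝ, ξ ψ = ψ w := by
    intro ψ
    rw [← hw]
    exact NormedSpace.dual_def ℝ X w ψ
  have hξn : ‖ξ‖ = ‖w‖ := by
    rw [← hw]
    exact (NormedSpace.inclusionInDoubleDualLi ℝ (E := X)).norm_map w
  have hK2 : ‖φ‖ ^ 2 / 2 + ‖w‖ ^ 2 / 2 ≤ v := by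
    have h := hv2
    rw [hξn] at h
    linarith
  have hφw_lb : -(‖φ‖ * ‖w‖) ≤ φ w := by
    have h1 : ‖φ w‖ ≤ ‖φ‖ * ‖w‖ := φ.le_opNorm w
    rw [Real.norm_eq_abs] at h1
    exact neg_le_of_abs_le h1
  have hno : ‖φ‖ * ‖w‖ ≤ ‖φ‖ ^ 2 / 2 + ‖w‖ ^ 2 / 2 := by
    nlinarith [sq_nonneg (‖φ‖ - ‖w‖)]
  have hwB : (w, φ) ∈ B := by
    refine hBmax (w, φ) (fun q hq => ?_)
    have h1 := hK1 q hq
    rw [hξw q.2] at h1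
    have key : ((w, φ).2 - q.2) ((w, φ).1 - q.1)
        = φ w - φ q.1 - q.2 w + q.2 q.1 := by
      simp only [ContinuousLinearMap.sub_apply, map_sub]
      ring
    rw [key]
    linarith
  have hKw := hK1 (w, φ) hwB
  rw [hξw φ] at hKw
  simp only at hKw
  have hφv : φ w + v ≤ 0 := by linarith
  have hww : ‖φ‖ = ‖w‖ := by nlinarith [sq_nonneg (‖φ‖ - ‖w‖)]
  have hφw : φ w = -‖w‖ ^ 2 := by nlinarith
  exact ⟨w, φ, hwB, hφw, hww⟩

end AuxiliaryLemmas

set_option maxHeartbeats 1000000 in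
/-- Rockafellar's surjectivity theorem: for reflexive `X` and maximal
monotone `A`, `R(J_X + λA) = X*` for all `λ > 0`. -/
theorem rockafellar_surjectivity
    (hrefl : Function.Surjective (NormedSpace.inclusionInDoubleDual ℝ X))
    (A : Set (X × (X →L[ℝ] ℝ))) (hA : MaximalMonotoneSet A) :
    ∀ lam : ℝ, 0 < lam → ∀ z' : X →L[ℝ] ℝ,
      ∃ (x : X) (y' x' : X →L[ℝ] ℝ),
        y' ∈ dualityMap x ∧ (x, x') ∈ A ∧ z' = y' + lam • x' := by
  intro lam hlam z'
  classical
  have hlam' : lam ≠ 0 := ne_of_gt hlam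
  have hAne : A.Nonempty := by
    rcases A.eq_empty_or_nonempty with h | h
    · exact ⟨(0, 0), hA.2 (0, 0) (fun q hq => by rw [h] at hq; exact hq.elim)⟩
    · exact h
  set B : Set (X × (X →L[ℝ] ℝ)) :=
    (fun q : X × (X →L[ℝ] ℝ) => (q.1, lam • q.2 - z')) '' A with hBdef
  have hBmono : ∀ p ∈ B, ∀ q ∈ B, 0 ≤ (p.2 - q.2) (p.1 - q.1) := by
    rintro _ ⟨p, hp, rfl⟩ _ ⟨q, hq, rfl⟩
    have key : (lam • p.2 - z' - (lam • q.2 - z')) (p.1 - q.1)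
        = lam * ((p.2 - q.2) (p.1 - q.1)) := by
      simp only [ContinuousLinearMap.sub_apply, ContinuousLinearMap.smul_apply,
        map_sub, smul_eq_mul]
      ring
    show 0 ≤ (lam • p.2 - z' - (lam • q.2 - z')) (p.1 - q.1)
    rw [key]
    exact mul_nonneg hlam.le (hA.1 p hp q hq)
  have hBmax : ∀ p : X × (X →L[ℝ] ℝ),
      (∀ q ∈ B, 0 ≤ (p.2 - q.2) (p.1 - q.1)) → p ∈ B := by
    intro p hp
    have hmem : (p.1, lam⁻¹ • (p.2 + z')) ∈ A := by
      refine hA.2 _ (fun q hq => ?_)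
      have h0 := hp (q.1, lam • q.2 - z') ⟨q, hq, rfl⟩
      have key : ((lam⁻¹ • (p.2 + z')) - q.2) (p.1 - q.1)
          = lam⁻¹ * ((p.2 - (lam • q.2 - z')) (p.1 - q.1)) := by
        simp only [ContinuousLinearMap.sub_apply, ContinuousLinearMap.smul_apply,
          ContinuousLinearMap.add_apply, map_sub, smul_eq_mul]
        field_simp
        ring
      show 0 ≤ ((lam⁻¹ • (p.2 + z')) - q.2) (p.1 - q.1)
      rw [key]
      exact mul_nonneg (inv_nonneg.mpr hlam.le) h0
    refine ⟨(p.1, lam⁻¹ • (p.2 + z')), hmem, ?_⟩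
    have heq : lam • lam⁻¹ • (p.2 + z') - z' = p.2 := by
      rw [smul_smul, mul_inv_cancel₀ hlam']
      simp
    show (p.1, lam • lam⁻¹ • (p.2 + z') - z') = p
    rw [heq]
  have hBne : B.Nonempty := hAne.image _
  obtain ⟨w, φ, hwB, hφw, hww⟩ := my_core hrefl B hBmono hBmax hBne
  obtain ⟨a, haA, haeq⟩ := hwB
  have ha1 : a.1 = w := congrArg Prod.fst haeq
  have ha2 : lam • a.2 - z' = φ := congrArg Prod.snd haeq
  refine ⟨w, -φ, a.2, ⟨?_, ?_⟩, ?_, ?_⟩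
  · show (-φ) w = ‖w‖ ^ 2
    rw [ContinuousLinearMap.neg_apply, hφw]
    ring
  · rw [norm_neg, hww]
  · rw [← ha1]
    exact (Prod.mk.eta (p := a)) ▸ haA
  · rw [← ha2]
    abel
end
end

section
/- Let X be a real Banach space and φ : X → (-∞, +∞] a proper convex l.s.c. function, ψ : X → ℝ a continuous convex function. Then for all x ∈ Dom(∂φ), ∂(φ + ψ)(x) = ∂φ(x) + ∂ψ(x). -/
noncomputable section

variable {X : Type*} [NormedAddCommGroup X] [NormedSpace ℝ X] [CompleteSpace X]

/-- subdifferential sum rule `∂(φ + ψ)(x) = ∂φ(x) + ∂ψ(x)` for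
`x ∈ Dom(∂φ)`, with `ψ` real-valued continuous convex. -/
theorem subdiff_add_rule (φ : X → EReal) (hproper : ProperFn φ)
    (hconv : ERealConvexOn φ) (hlsc : LowerSemicontinuous φ)
    (ψ : X → ℝ) (hψc : Continuous ψ) (hψconv : ConvexOn ℝ Set.univ ψ)
    (x : X) (hx : ∃ x', (x, x') ∈ subdiff φ) :
    {s : X →L[ℝ] ℝ | (x, s) ∈ subdiff (fun y => φ y + ((ψ y : ℝ) : EReal))} =
      {s : X →L[ℝ] ℝ | ∃ a b : X →L[ℝ] ℝ, (x, a) ∈ subdiff φ ∧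
        (∀ y : X, b (y - x) + ψ x ≤ ψ y) ∧ s = a + b} := by
  obtain ⟨hbot, y₀, hy₀⟩ := hproper
  obtain ⟨x₀', hx₀'⟩ := hx
  have hφxtop : φ x ≠ ⊤ := by
    intro h
    apply hy₀
    have h1 := hx₀' y₀
    rw [h, EReal.add_top_of_ne_bot (EReal.coe_ne_bot _)] at h1
    exact top_le_iff.mp h1
  set c : ℝ := (φ x).toReal with hcdef
  have hφx : φ x = (c : EReal) := (EReal.coe_toReal hφxtop (hbot x)).symm
  ext s
  simp only [Set.mem_setOf_eq]
  constructor
  · intro hs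
    have hs' : ∀ y, ((s (y - x) : ℝ) : EReal) + (φ x + ((ψ x : ℝ) : EReal)) ≤
        φ y + ((ψ y : ℝ) : EReal) := hs
    set O : Set (X × ℝ) := {p | ψ p.1 - ψ x < p.2} with hOdef
    set B : Set (X × ℝ) := {p | φ p.1 ≤ ((s (p.1 - x) + c - p.2 : ℝ) : EReal)} with hBdef
    have hOopen : IsOpen O :=
      isOpen_lt ((hψc.comp continuous_fst).sub continuous_const) continuous_snd
    have hOconv : Convex ℝ O := by
      rintro ⟨p1, p2⟩ hp ⟨q1, q2⟩ hq a b ha hb hab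
      simp only [hOdef, Set.mem_setOf_eq] at hp hq ⊢
      have h1 : ψ (a • p1 + b • q1) ≤ a * ψ p1 + b * ψ q1 :=
        hψconv.2 (Set.mem_univ p1) (Set.mem_univ q1) ha hb hab
      rcases eq_or_lt_of_le ha with rfl | ha'
      · simp only [zero_add] at hab; subst hab; simpa using hq
      rcases eq_or_lt_of_le hb with rfl | hb'
      · simp only [add_zero] at hab; subst hab; simpa using hp
      have h2 : a * ψ p1 < a * (ψ x + p2) := by nlinarith
      have h3 : b * ψ q1 < b * (ψ x + q2) := by nlinarith
      have he : a * ψ x + b * ψ x = ψ x := by linear_combination (ψ x) * hab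
      simp only [Prod.fst_add, Prod.snd_add, Prod.smul_mk, smul_eq_mul]
      nlinarith
    have hBconv : Convex ℝ B := by
      rintro ⟨p1, p2⟩ hp ⟨q1, q2⟩ hq a b ha hb hab
      simp only [hBdef, Set.mem_setOf_eq] at hp hq ⊢
      have hp_top : φ p1 ≠ ⊤ := ne_top_of_le_ne_top (EReal.coe_ne_top _) hp
      have hq_top : φ q1 ≠ ⊤ := ne_top_of_le_ne_top (EReal.coe_ne_top _) hq
      set u : ℝ := (φ p1).toReal with hu
      set v : ℝ := (φ q1).toReal with hv
      have hup : φ p1 = (u : EReal) := (EReal.coe_toReal hp_top (hbot p1)).symm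
      have hvq : φ q1 = (v : EReal) := (EReal.coe_toReal hq_top (hbot q1)).symm
      have hule : u ≤ s (p1 - x) + c - p2 := by
        rw [hup] at hp; exact EReal.coe_le_coe_iff.mp hp
      have hvle : v ≤ s (q1 - x) + c - q2 := by
        rw [hvq] at hq; exact EReal.coe_le_coe_iff.mp hq
      have hcv := hconv p1 q1 a b ha hb hab
      rw [hup, hvq] at hcv
      have hcv' : φ (a • p1 + b • q1) ≤ ((a * u + b * v : ℝ) : EReal) := by
        rw [EReal.coe_add, EReal.coe_mul, EReal.coe_mul]; exact hcv
      refine le_trans hcv' ?_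
      rw [EReal.coe_le_coe_iff]
      have hls : s (a • p1 + b • q1 - x) = a * s (p1 - x) + b * s (q1 - x) := by
        simp only [map_sub, map_add, map_smul, smul_eq_mul]
        linear_combination (s x) * hab
      simp only [Prod.fst_add, Prod.snd_add, Prod.smul_mk, smul_eq_mul]
      rw [hls]
      have hc2 : a * c + b * c = c := by linear_combination c * hab
      nlinarith [mul_le_mul_of_nonneg_left hule ha, mul_le_mul_of_nonneg_left hvle hb, hc2]
    have hdisj : Disjoint O B := by
      rw [Set.disjoint_left]
      rintro ⟨p1, p2⟩ hp hq
      simp only [hOdef, hBdef, Set.mem_setOf_eq] at hp hq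
      have h1 := hs' p1
      have h2 : φ p1 + ((ψ p1 : ℝ) : EReal) ≤
          ((s (p1 - x) + c - p2 + ψ p1 : ℝ) : EReal) := by
        rw [EReal.coe_add]
        exact add_le_add hq le_rfl
      have h3 : ((s (p1 - x) + c + ψ x : ℝ) : EReal) ≤
          ((s (p1 - x) + c - p2 + ψ p1 : ℝ) : EReal) := by
        refine le_trans (le_of_eq ?_) (le_trans h1 h2)
        rw [hφx, EReal.coe_add, EReal.coe_add, add_assoc]
      rw [EReal.coe_le_coe_iff] at h3
      linarith
    obtain ⟨F, w, hFO, hFB⟩ := geometric_hahn_banach_open hOconv hOopen hBconv hdisj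
    set k : ℝ := F (0, 1) with hkdef
    have hF : ∀ (y : X) (r : ℝ), F (y, r) = F (y, 0) + r * k := by
      intro y r
      have h : ((y, r) : X × ℝ) = (y, (0 : ℝ)) + r • ((0 : X), (1 : ℝ)) := by
        simp [Prod.ext_iff]
      rw [h, map_add, map_smul, smul_eq_mul]
    have hxB : ((x, (0 : ℝ)) : X × ℝ) ∈ B := by
      simp only [hBdef, Set.mem_setOf_eq, sub_self, map_zero, hφx, sub_zero, zero_add]
      exact le_rfl
    have hwx : w ≤ F (x, 0) := by simpa using hFB _ hxB
    have hxO : ∀ r : ℝ, 0 < r → F (x, 0) + r * k < w := by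
      intro r hr
      have hm : ((x, r) : X × ℝ) ∈ O := by
        simp only [hOdef, Set.mem_setOf_eq, sub_self]; exact hr
      have := hFO _ hm
      rwa [hF] at this
    have hk : k < 0 := by
      have h1 := hxO 1 one_pos
      nlinarith
    have hkne : k ≠ 0 := ne_of_lt hk
    have hpos : (0 : ℝ) < -(1/k) := by
      have : (1 : ℝ)/k < 0 := div_neg_of_pos_of_neg one_pos hk
      linarith
    have hwx' : F (x, 0) ≤ w := by
      by_contra h
      push_neg at h
      have hε : 0 < (F (x, 0) - w) / (-k) := div_pos (by linarith) (by linarith)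
      have h2 := hxO _ hε
      have hkne' : -k ≠ 0 := neg_ne_zero.mpr hkne
      have h3 : (F (x, 0) - w) / (-k) * k = -(F (x, 0) - w) := by
        field_simp
      rw [h3] at h2
      linarith
    have hwxeq : F (x, 0) = w := le_antisymm hwx' hwx
    set b : X →L[ℝ] ℝ := (-(1/k)) • (F.comp (ContinuousLinearMap.inl ℝ X ℝ)) with hbdef
    have hbapp : ∀ y : X, b y = -(1/k) * F (y, 0) := by
      intro y
      simp [hbdef, ContinuousLinearMap.comp_apply, ContinuousLinearMap.inl_apply]
    have hbd : ∀ y : X, b (y - x) = -(1/k) * (F (y, 0) - F (x, 0)) := by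
      intro y
      rw [hbapp]
      have hyx : ((y - x, (0:ℝ)) : X × ℝ) = (y, (0:ℝ)) - (x, (0:ℝ)) := by
        simp [Prod.ext_iff]
      rw [hyx, map_sub]
    have hbψ : ∀ y : X, b (y - x) + ψ x ≤ ψ y := by
      intro y
      by_contra hcon
      push_neg at hcon
      set ε : ℝ := (b (y - x) + ψ x - ψ y) / 2 with hεdef
      have hε : 0 < ε := by simp only [hεdef]; linarith
      have hm : ((y, ψ y - ψ x + ε) : X × ℝ) ∈ O := by
        simp only [hOdef, Set.mem_setOf_eq]; linarith
      have h1 := hFO _ hm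
      rw [hF] at h1
      have h3 : F (y, 0) - F (x, 0) < -(ψ y - ψ x + ε) * k := by
        rw [hwxeq]; linarith
      have h4 := mul_lt_mul_of_pos_left h3 hpos
      have h5 : -(1/k) * (-(ψ y - ψ x + ε) * k) = ψ y - ψ x + ε := by
        field_simp
      rw [h5, ← hbd y] at h4
      linarith
    refine ⟨s - b, b, ?_, hbψ, by abel⟩
    intro y
    simp only
    by_cases hy : φ y = ⊤
    · rw [hy]; exact le_top
    set p : ℝ := (φ y).toReal with hpdef
    have hyr : φ y = (p : EReal) := (EReal.coe_toReal hy (hbot y)).symm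
    have hyB : ((y, s (y - x) + c - p) : X × ℝ) ∈ B := by
      simp only [hBdef, Set.mem_setOf_eq]
      have he : s (y - x) + c - (s (y - x) + c - p) = p := by ring
      rw [he, hyr]
    have h6 := hFB _ hyB
    rw [hF] at h6
    have h7 : F (x, 0) - F (y, 0) ≤ (s (y - x) + c - p) * k := by
      rw [← hwxeq] at h6; linarith
    have h8 := mul_le_mul_of_nonneg_left h7 hpos.le
    have h9 : -(1/k) * ((s (y - x) + c - p) * k) = -(s (y - x) + c - p) := by
      field_simp
    rw [h9] at h8
    have h10 : s (y - x) + c - p ≤ b (y - x) := by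
      rw [hbd y]; linarith
    rw [hyr, hφx, ← EReal.coe_add, EReal.coe_le_coe_iff, ContinuousLinearMap.sub_apply]
    linarith
  · rintro ⟨a, b, ha, hb, rfl⟩
    intro y
    simp only
    have h1 : ((a (y - x) : ℝ) : EReal) + φ x ≤ φ y := ha y
    have h2 : ((b (y - x) : ℝ) : EReal) + ((ψ x : ℝ) : EReal) ≤ ((ψ y : ℝ) : EReal) := by
      rw [← EReal.coe_add, EReal.coe_le_coe_iff]
      exact hb y
    have h3 := add_le_add h1 h2
    refine le_trans (le_of_eq ?_) h3
    rw [ContinuousLinearMap.add_apply, EReal.coe_add]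
    abel
end
end
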